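/- Let V be a valuation domain with maximal ideal m, and suppose m is not a principal ideal. Then there exists a nonzero element x ∈ m such that the principal ideal xV equals the intersection of all ideals J of V with xV ⊊ J. -/
import Mathlib


section OhmRushDefs

variable {R S : Type*} [CommRing R] [CommRing S]

/-- The Ohm–Rush content of an element `s` of an `R`-algebra `S` (given by a ring
homomorphism `f : R →+* S`): the intersection of all ideals `I` of `R` with `s ∈ IS`. -/
def ORContent (f : R →+* S) (s : S) : Ideal R :=
  sInf {I : Ideal R | s ∈ Ideal.map f I}

/-- `S` is an Ohm–Rush `R`-algebra if every `s ∈ S` lies in the extension of its content. -/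
def IsOhmRushAlgebra (f : R →+* S) : Prop :=
  ∀ s : S, s ∈ Ideal.map f (ORContent f s)

/-- Flatness of a ring homomorphism. -/
def RingHomFlat (f : R →+* S) : Prop :=
  letI := f.toAlgebra; Module.Flat R S

/-- Faithful flatness of a ring homomorphism. -/
def RingHomFaithfullyFlat (f : R →+* S) : Prop :=
  letI := f.toAlgebra; Module.FaithfullyFlat R S

/-- Module-freeness of a ring homomorphism. -/
def RingHomFree (f : R →+* S) : Prop :=
  letI := f.toAlgebra; Module.Free R S

/-- Weak content algebra: Ohm–Rush and `√c(fg) = √(c(f)c(g))`. -/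
def IsWeakContentAlgebra (f : R →+* S) : Prop :=
  IsOhmRushAlgebra f ∧ ∀ s t : S,
    (ORContent f (s * t)).radical = (ORContent f s * ORContent f t).radical

/-- Semicontent algebra: faithfully flat Ohm–Rush, and for every multiplicative subset `W`
of `R`, if `c(s)R_W = R_W` then `c(st)R_W = c(t)R_W`. -/
def IsSemicontentAlgebra (f : R →+* S) : Prop :=
  IsOhmRushAlgebra f ∧ RingHomFaithfullyFlat f ∧
    ∀ (W : Submonoid R) (s t : S),
      Ideal.map (algebraMap R (Localization W)) (ORContent f s) = ⊤ →
      Ideal.map (algebraMap R (Localization W)) (ORContent f (s * t)) =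
        Ideal.map (algebraMap R (Localization W)) (ORContent f t)

/-- Content algebra: faithfully flat Ohm–Rush satisfying the Dedekind–Mertens type formula. -/
def IsContentAlgebra (f : R →+* S) : Prop :=
  IsOhmRushAlgebra f ∧ RingHomFaithfullyFlat f ∧
    ∀ s t : S, ∃ n : ℕ, 0 < n ∧
      ORContent f s ^ n * ORContent f t = ORContent f s ^ (n - 1) * ORContent f (s * t)

/-- A ring homomorphism satisfies INC if comparable primes of `S` with the same
contraction to `R` are equal. -/
def SatisfiesINC (f : R →+* S) : Prop :=
  ∀ Q Q' : Ideal S, Q.IsPrime → Q'.IsPrime → Q ≤ Q' →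
    Ideal.comap f Q = Ideal.comap f Q' → Q = Q'

/-- A valuation domain: a domain whose divisibility is total. -/
def IsValuationDomain (A : Type*) [CommRing A] : Prop :=
  IsDomain A ∧ ∀ a b : A, ∃ c : A, a * c = b ∨ b * c = a

/-- A Prüfer domain: a domain whose localization at every maximal ideal is a
valuation domain. -/
def IsPruferDomain (A : Type*) [CommRing A] : Prop :=
  IsDomain A ∧ ∀ (P : Ideal A) (hP : P.IsMaximal),
    haveI := hP.isPrime
    IsValuationDomain (Localization.AtPrime P)

end OhmRushDefs

/-- In a valuation domain whose maximal ideal is not principal, there is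
a nonzero `x` in the maximal ideal such that `xV` is the intersection of all ideals
strictly containing it. -/
theorem exists_principal_eq_sInf_of_not_principal {V : Type*} [CommRing V] [IsDomain V]
    [ValuationRing V] (hm : ¬ (IsLocalRing.maximalIdeal V).IsPrincipal) :
    ∃ x : V, x ≠ 0 ∧ x ∈ IsLocalRing.maximalIdeal V ∧
      Ideal.span {x} = sInf {J : Ideal V | Ideal.span {x} < J} := by
  -- The maximal ideal is nonzero, else it would be principal.
  have hmbot : IsLocalRing.maximalIdeal V ≠ ⊥ := by
    intro h
    exact hm ⟨0, by rw [h]; exact (Ideal.span_singleton_eq_bot.mpr rfl).symm⟩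
  obtain ⟨x, hxm, hx0⟩ := Submodule.exists_mem_ne_zero_of_ne_bot hmbot
  refine ⟨x, hx0, hxm, le_antisymm (le_sInf fun J hJ => hJ.le) ?_⟩
  intro y hy
  rw [Ideal.mem_sInf] at hy
  by_contra hyx
  -- x = y * c with c a nonunit
  obtain ⟨c, hc | hc⟩ := ValuationRing.cond x y
  · exact hyx (Ideal.mem_span_singleton.mpr ⟨c, hc.symm⟩)
  have hy0 : y ≠ 0 := fun h => hyx (by simp [h])
  have hcm : c ∈ IsLocalRing.maximalIdeal V := by
    rw [IsLocalRing.mem_maximalIdeal, mem_nonunits_iff]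
    rintro ⟨u, rfl⟩
    exact hyx (Ideal.mem_span_singleton.mpr ⟨(u⁻¹ : Vˣ), by
      rw [← hc]; rw [mul_assoc]; simp⟩)
  set J : Ideal V := Ideal.span {y} * IsLocalRing.maximalIdeal V with hJdef
  have hxJ : x ∈ J := Ideal.mem_span_singleton_mul.mpr ⟨c, hcm, hc⟩
  have hle : Ideal.span {x} ≤ J := by
    rw [Ideal.span_le]; simpa using hxJ
  have hne : Ideal.span {x} ≠ J := by
    intro h
    refine hm ⟨c, le_antisymm (fun s hs => ?_) ?_⟩
    · have : y * s ∈ J := Ideal.mem_span_singleton_mul.mpr ⟨s, hs, rfl⟩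
      rw [← h, Ideal.mem_span_singleton] at this
      obtain ⟨d, hd⟩ := this
      rw [← hc, mul_assoc] at hd
      have := mul_left_cancel₀ hy0 hd
      exact Ideal.mem_span_singleton.mpr ⟨d, this⟩
    · exact (Ideal.span_singleton_le_iff_mem _).mpr hcm
  have hyJ : y ∈ J := hy (lt_of_le_of_ne hle hne)
  obtain ⟨s, hs, hys⟩ := Ideal.mem_span_singleton_mul.mp hyJ
  have : y * (s - 1) = 0 := by ring_nf; rw [mul_comm] at hys; linear_combination hys
  rcases mul_eq_zero.mp this with h | h
  · exact hy0 h
  · have : s = 1 := sub_eq_zero.mp h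
    exact (IsLocalRing.maximalIdeal.isMaximal V).ne_top (Ideal.eq_top_iff_one _ |>.mpr (this ▸ hs))
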